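/- Let X^{(1)},...,X^{(k)} be independent identically distributed r-truncated degenerate Poisson random variables with parameter α > 0 and 0 < λ < 1, and let X = Σ_{i=1}^k X^{(i)}. Then P(X = n) = (k!/(e_λ(α)-e_{λ,r}(α))^k) (α^n/n!) S_{2,λ}^{[r]}(n, kr+k) for n ≥ k(r+1), and P(X = n) = 0 otherwise. -/

import Mathlib

/-- Degenerate falling factorial `(1)_{k,λ}`. -/
noncomputable def degFall (l : ℝ) (k : ℕ) : ℝ := ∏ j ∈ Finset.range k, (1 - (j : ℝ) * l)

/-- `e_λ(α) = Σ_{k=0}^∞ (1)_{k,λ} α^k / k!`. -/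
noncomputable def degExp (l a : ℝ) : ℝ := ∑' k : ℕ, degFall l k * a ^ k / (Nat.factorial k : ℝ)

/-- `e_{λ,r}(α) = Σ_{k=0}^r (1)_{k,λ} α^k / k!`. -/
noncomputable def degExpTrunc (l : ℝ) (r : ℕ) (a : ℝ) : ℝ :=
  ∑ k ∈ Finset.range (r + 1), degFall l k * a ^ k / (Nat.factorial k : ℝ)

/-- The pmf of the `r`-truncated degenerate Poisson random variable `X_{λ,r}`. -/
noncomputable def truncDegPoissonPmf (l : ℝ) (r : ℕ) (a : ℝ) (k : ℕ) : ℝ :=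
  if r + 1 ≤ k then
    degFall l k * a ^ k / ((Nat.factorial k : ℝ) * (degExp l a - degExpTrunc l r a))
  else 0

/-- The `n`-th moment `E[X_{λ,r}^n]`. -/
noncomputable def truncDegPoissonMoment (l : ℝ) (r : ℕ) (a : ℝ) (n : ℕ) : ℝ :=
  ∑' k : ℕ, (k : ℝ) ^ n * truncDegPoissonPmf l r a k

/-- `e_λ(t)` as a formal power series over ℝ. -/
noncomputable def degExpPS (l : ℝ) : PowerSeries ℝ :=
  PowerSeries.mk fun m => degFall l m / (Nat.factorial m : ℝ)

/-- `e_{λ,r}(t)` as a formal power series. -/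
noncomputable def degExpTruncPS (l : ℝ) (r : ℕ) : PowerSeries ℝ :=
  PowerSeries.mk fun m => if m ≤ r then degFall l m / (Nat.factorial m : ℝ) else 0

/-- `r`-truncated degenerate Stirling numbers of the second kind `S_{2,λ}^{[r]}(n,k(r+1))`,
defined by `(1/k!)(e_λ(t)-e_{λ,r}(t))^k = Σ_{n≥k(r+1)} S_{2,λ}^{[r]}(n,k(r+1)) t^n/n!`. -/
noncomputable def truncDegStirling2 (l : ℝ) (r n k : ℕ) : ℝ :=
  (Nat.factorial n : ℝ) *
    PowerSeries.coeff n
      (((Nat.factorial k : ℝ)⁻¹) • (degExpPS l - degExpTruncPS l r) ^ k)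



lemma coeff_diff (l : ℝ) (r m : ℕ) :
    PowerSeries.coeff m (degExpPS l - degExpTruncPS l r) =
      if r + 1 ≤ m then degFall l m / (Nat.factorial m : ℝ) else 0 := by
  simp only [map_sub, degExpPS, degExpTruncPS, PowerSeries.coeff_mk]
  by_cases h : m ≤ r
  · rw [if_pos h, if_neg (by omega), sub_self]
  · rw [if_neg h, if_pos (by omega), sub_zero]

lemma pmf_eq (a l : ℝ) (r m : ℕ) :
    truncDegPoissonPmf l r a m =
      PowerSeries.coeff m (degExpPS l - degExpTruncPS l r) * a ^ m /
        (degExp l a - degExpTrunc l r a) := by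
  rw [coeff_diff, truncDegPoissonPmf]
  by_cases h : r + 1 ≤ m
  · simp only [if_pos h]
    rw [div_mul_eq_mul_div, div_div]
  · simp [h]

lemma ofReal_prod' {ι : Type*} (s : Finset ι) (f : ι → ℝ) (h : ∀ i ∈ s, 0 ≤ f i) :
    ENNReal.ofReal (∏ i ∈ s, f i) = ∏ i ∈ s, ENNReal.ofReal (f i) := by
  induction s using Finset.cons_induction with
  | empty => simp
  | cons i s hi ih =>
    rw [Finset.prod_cons, Finset.prod_cons, ENNReal.ofReal_mul (h i (Finset.mem_cons_self i s)),
      ih fun j hj => h j (Finset.mem_cons_of_mem hj)]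

lemma coeff_pow_eq (l : ℝ) (r n k : ℕ) :
    PowerSeries.coeff n ((degExpPS l - degExpTruncPS l r) ^ k) =
      ∑ f ∈ Finset.finsuppAntidiag (Finset.univ : Finset (Fin k)) n,
        ∏ i : Fin k, PowerSeries.coeff (f i) (degExpPS l - degExpTruncPS l r) := by
  have h : (degExpPS l - degExpTruncPS l r) ^ k =
      ∏ _i : Fin k, (degExpPS l - degExpTruncPS l r) := by
    rw [Finset.prod_const, Finset.card_univ, Fintype.card_fin]
  rw [h, PowerSeries.coeff_prod]



-- the summand of degExp
noncomputable def dSeq (l a : ℝ) (m : ℕ) : ℝ := degFall l m * a ^ m / (Nat.factorial m : ℝ)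

lemma dSeq_succ (l a : ℝ) (m : ℕ) :
    dSeq l a (m + 1) = dSeq l a m * ((1 - (m : ℝ) * l) * (a / (m + 1))) := by
  have hm : (Nat.factorial m : ℝ) ≠ 0 := Nat.cast_ne_zero.mpr (Nat.factorial_ne_zero m)
  have hm1 : ((m : ℝ) + 1) ≠ 0 := by positivity
  simp only [dSeq, degFall, Finset.prod_range_succ, Nat.factorial_succ, pow_succ,
    Nat.cast_mul, Nat.cast_add, Nat.cast_one]
  generalize (∏ j ∈ Finset.range m, (1 - (j : ℝ) * l)) = P
  field_simp

lemma neg_bound (l a : ℝ) (hl : 0 < l) (ha : 0 < a) (m : ℕ) (hm : 1 / l ≤ (m : ℝ)) :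
    max (-(dSeq l a (m + 1))) 0 ≤ l * a * max (dSeq l a m) 0 := by
  have hfac : (1 : ℝ) ≤ (m : ℝ) * l := by
    rw [div_le_iff₀ hl] at hm; linarith
  rcases le_or_gt 0 (dSeq l a (m + 1)) with h | h
  · have : max (-(dSeq l a (m + 1))) 0 = 0 := max_eq_right (by linarith)
    rw [this]
    positivity
  · rw [dSeq_succ] at h ⊢
    have hcoef : (1 - (m : ℝ) * l) * (a / (m + 1)) ≤ 0 := by
      apply mul_nonpos_of_nonpos_of_nonneg (by linarith) (by positivity)
    have hdm : 0 < dSeq l a m := by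
      by_contra hc
      push_neg at hc
      nlinarith [mul_nonneg (neg_nonneg.mpr hc) (neg_nonneg.mpr hcoef)]
    have h1 : max (-(dSeq l a m * ((1 - (m : ℝ) * l) * (a / (m + 1))))) 0 =
        dSeq l a m * (((m : ℝ) * l - 1) * (a / (m + 1))) := by
      rw [max_eq_left (by linarith)]; ring
    have h2 : max (dSeq l a m) 0 = dSeq l a m := max_eq_left hdm.le
    rw [h1, h2]
    have hcb : ((m : ℝ) * l - 1) * (a / (m + 1)) ≤ l * a := by
      have hm1 : (0:ℝ) < (m:ℝ) + 1 := by positivity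
      rw [mul_div_assoc', div_le_iff₀ hm1]
      nlinarith [hl.le, ha.le, Nat.cast_nonneg (α := ℝ) m]
    calc dSeq l a m * (((m : ℝ) * l - 1) * (a / (m + 1)))
        ≤ dSeq l a m * (l * a) := by
          exact mul_le_mul_of_nonneg_left hcb hdm.le
      _ = l * a * dSeq l a m := by ring

lemma summable_of_pos_summable (l a : ℝ) (hl : 0 < l) (ha : 0 < a)
    (hpos : Summable fun m => max (dSeq l a m) 0) : Summable (dSeq l a) := by
  set M := Nat.ceil (1 / l) with hM
  have hneg : Summable fun m => max (-(dSeq l a m)) 0 := by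
    rw [← summable_nat_add_iff (M + 1)]
    refine Summable.of_nonneg_of_le (f := fun n => l * a * max (dSeq l a (n + M)) 0)
      (fun n => le_max_right _ _) ?_ ?_
    · intro n
      have : (n : ℝ) + M ≥ 1 / l := by
        have := Nat.le_ceil (1 / l)
        push_cast
        have : ((M : ℝ)) ≥ 1 / l := this
        linarith [Nat.cast_nonneg (α := ℝ) n]
      have := neg_bound l a hl ha (n + M) (by push_cast at this ⊢; linarith)
      simpa [add_assoc] using this
    · exact ((summable_nat_add_iff M).mpr hpos).mul_left _
  have : (fun m => max (dSeq l a m) 0 - max (-(dSeq l a m)) 0) = dSeq l a := by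
    funext m
    exact max_zero_sub_eq_self _
  rw [← this]
  exact hpos.sub hneg

noncomputable def qSeq (l a : ℝ) (r m : ℕ) : ℝ := if r + 1 ≤ m then dSeq l a m else 0

lemma pmf_eq_q (l a : ℝ) (r m : ℕ) :
    truncDegPoissonPmf l r a m = qSeq l a r m / (degExp l a - degExpTrunc l r a) := by
  unfold truncDegPoissonPmf qSeq dSeq
  by_cases h : r + 1 ≤ m
  · rw [if_pos h, if_pos h, div_div]
  · rw [if_neg h, if_neg h, zero_div]

lemma ofReal_max (x : ℝ) : ENNReal.ofReal (max x 0) = ENNReal.ofReal x := by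
  rcases le_or_gt 0 x with h | h
  · rw [max_eq_left h]
  · rw [max_eq_right h.le, ENNReal.ofReal_zero, ENNReal.ofReal_of_nonpos h.le]

open MeasureTheory in
lemma pmf_nonneg (a l : ℝ) (r : ℕ) (ha : 0 < a) (hl : 0 < l)
    (hD : 0 < degExp l a - degExpTrunc l r a)
    {Ω : Type*} [MeasureSpace Ω] (μ : Measure Ω) [IsProbabilityMeasure μ]
    (X : Ω → ℕ) (hXm : Measurable X)
    (hXd : ∀ m : ℕ, μ {ω | X ω = m} = ENNReal.ofReal (truncDegPoissonPmf l r a m)) :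
    ∀ m, 0 ≤ truncDegPoissonPmf l r a m := by
  set D := degExp l a - degExpTrunc l r a with hDdef
  have hDne : ENNReal.ofReal D ≠ 0 := by
    simp [ENNReal.ofReal_eq_zero, not_le, hD]
  have hDtop : ENNReal.ofReal D ≠ ⊤ := ENNReal.ofReal_ne_top
  -- total mass one
  have hunion : (⋃ m : ℕ, X ⁻¹' {m}) = Set.univ := by
    ext ω; simp
  have hdisj : Pairwise (Function.onFun Disjoint fun m : ℕ => X ⁻¹' {m}) := by
    intro m m' hmm'
    simp only [Function.onFun, Set.disjoint_left]
    rintro ω rfl h'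
    exact hmm' h'
  have hmeas : ∀ m : ℕ, MeasurableSet (X ⁻¹' {m}) :=
    fun m => hXm (measurableSet_singleton m)
  have H1 : ∑' m : ℕ, μ {ω | X ω = m} = 1 := by
    have h0 := measure_iUnion hdisj hmeas (μ := μ)
    rw [hunion, measure_univ] at h0
    have he : ∀ m : ℕ, {ω | X ω = m} = X ⁻¹' {m} := fun m => rfl
    simp only [he]
    exact h0.symm
  have H2 : ∑' m : ℕ, ENNReal.ofReal (qSeq l a r m) = ENNReal.ofReal D := by
    have h3 : ∀ m : ℕ, μ {ω | X ω = m} = ENNReal.ofReal (qSeq l a r m) / ENNReal.ofReal D := by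
      intro m
      rw [hXd m, pmf_eq_q, ENNReal.ofReal_div_of_pos hD]
    have h4 : (∑' m : ℕ, ENNReal.ofReal (qSeq l a r m) / ENNReal.ofReal D) = 1 := by
      rw [← tsum_congr h3]; exact H1
    simp only [div_eq_mul_inv, ENNReal.tsum_mul_right] at h4
    rw [← div_eq_mul_inv] at h4
    calc ∑' m : ℕ, ENNReal.ofReal (qSeq l a r m)
        = (∑' m : ℕ, ENNReal.ofReal (qSeq l a r m)) / ENNReal.ofReal D * ENNReal.ofReal D :=
          (ENNReal.div_mul_cancel hDne hDtop).symm
      _ = 1 * ENNReal.ofReal D := by rw [h4]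
      _ = ENNReal.ofReal D := one_mul _
  -- summability of max part
  have hqmax : Summable fun m => max (qSeq l a r m) 0 := by
    have := ENNReal.summable_toReal (f := fun m => ENNReal.ofReal (qSeq l a r m))
      (by rw [H2]; exact ENNReal.ofReal_ne_top)
    simpa [ENNReal.toReal_ofReal'] using this
  have hsmax : Summable fun m => max (dSeq l a m) 0 := by
    rw [← summable_nat_add_iff (r + 1)]
    have h5 := (summable_nat_add_iff (r + 1)).mpr hqmax
    refine h5.congr fun n => ?_
    simp [qSeq, Nat.le_add_left]
  have hs : Summable (dSeq l a) := summable_of_pos_summable l a hl ha hsmax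
  have hq : Summable (qSeq l a r) := by
    rw [← summable_nat_add_iff (r + 1)]
    refine ((summable_nat_add_iff (r + 1)).mpr hs).congr fun n => ?_
    simp [qSeq, Nat.le_add_left]
  -- tsum q = D
  have htq : ∑' m, qSeq l a r m = D := by
    have h6 := Summable.sum_add_tsum_nat_add (r + 1) hs
    have h7 := Summable.sum_add_tsum_nat_add (f := qSeq l a r) (r + 1) hq
    have h8 : ∑ i ∈ Finset.range (r + 1), qSeq l a r i = 0 :=
      Finset.sum_eq_zero fun i hi => by
        have : ¬ (r + 1 ≤ i) := by
          have := Finset.mem_range.mp hi; omega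
        simp [qSeq, this]
    have h9 : ∀ i : ℕ, qSeq l a r (i + (r + 1)) = dSeq l a (i + (r + 1)) := fun i => by
      simp [qSeq, Nat.le_add_left]
    have h10 : ∑' (i : ℕ), qSeq l a r (i + (r + 1)) = ∑' (i : ℕ), dSeq l a (i + (r + 1)) :=
      tsum_congr h9
    have h11 : ∑ i ∈ Finset.range (r + 1), dSeq l a i = degExpTrunc l r a := rfl
    have h12 : ∑' m, dSeq l a m = degExp l a := rfl
    rw [h8, zero_add, h10] at h7
    rw [h11, h12] at h6
    rw [← h7, hDdef]
    linarith
  -- positive part sums to D as well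
  have htmax : ∑' m, max (qSeq l a r m) 0 = D := by
    have ho : ENNReal.ofReal (∑' m, max (qSeq l a r m) 0) = ENNReal.ofReal D := by
      rw [ENNReal.ofReal_tsum_of_nonneg (fun m => le_max_right _ _) hqmax]
      calc ∑' m, ENNReal.ofReal (max (qSeq l a r m) 0)
          = ∑' m, ENNReal.ofReal (qSeq l a r m) := tsum_congr fun m => ofReal_max _
        _ = ENNReal.ofReal D := H2
    exact (ENNReal.ofReal_eq_ofReal_iff (tsum_nonneg fun m => le_max_right _ _) hD.le).mp ho
  have hzero : ∑' m, (max (qSeq l a r m) 0 - qSeq l a r m) = 0 := by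
    rw [Summable.tsum_sub hqmax hq, htmax, htq, sub_self]
  have hqnn : ∀ m, 0 ≤ qSeq l a r m := by
    intro m
    have := Summable.le_tsum (hqmax.sub hq) m
      (fun j _ => sub_nonneg.mpr (le_max_left _ _))
    rw [hzero] at this
    have h13 : max (qSeq l a r m) 0 - qSeq l a r m = 0 :=
      le_antisymm this (sub_nonneg.mpr (le_max_left _ _))
    have := le_max_right (qSeq l a r m) 0
    nlinarith [le_max_left (qSeq l a r m) 0]
  intro m
  rw [pmf_eq_q]
  exact div_nonneg (hqnn m) hD.le

open MeasureTheory ProbabilityTheory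

/-- If `X⁽¹⁾, …, X⁽ᵏ⁾` are i.i.d. `r`-truncated degenerate Poisson random variables with
parameter `α` and `X = Σᵢ X⁽ⁱ⁾`, then
`P(X = n) = (k!/(e_λ(α)-e_{λ,r}(α))^k)(αⁿ/n!) S_{2,λ}^{[r]}(n, k(r+1))` for `n ≥ k(r+1)`,
and `P(X = n) = 0` otherwise. -/
theorem truncDegPoisson_iid_sum (a l : ℝ) (r k : ℕ) (ha : 0 < a) (hl : 0 < l) (hl1 : l < 1)
    (hk : 1 ≤ k) (hD : 0 < degExp l a - degExpTrunc l r a)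
    {Ω : Type*} [MeasureSpace Ω] (μ : Measure Ω) [IsProbabilityMeasure μ]
    (X : Fin k → Ω → ℕ) (hXm : ∀ i, Measurable (X i))
    (hIndep : iIndepFun X μ)
    (hXd : ∀ i, ∀ m : ℕ, μ {ω | X i ω = m} = ENNReal.ofReal (truncDegPoissonPmf l r a m)) :
    ∀ n : ℕ,
      μ {ω | (∑ i, X i ω) = n} =
        if k * (r + 1) ≤ n then
          ENNReal.ofReal ((Nat.factorial k : ℝ) / (degExp l a - degExpTrunc l r a) ^ k *
            (a ^ n / (Nat.factorial n : ℝ)) * truncDegStirling2 l r n k)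
        else 0 := by
  intro n
  have hpmf_nn : ∀ m, 0 ≤ truncDegPoissonPmf l r a m :=
    pmf_nonneg a l r ha hl hD μ (X ⟨0, hk⟩) (hXm _) (hXd _)
  set A := Finset.finsuppAntidiag (Finset.univ : Finset (Fin k)) n with hA
  -- decompose the event as a disjoint union over A
  have hset : {ω | (∑ i, X i ω) = n} = ⋃ f ∈ A, ⋂ i, X i ⁻¹' {(f : Fin k →₀ ℕ) i} := by
    ext ω
    simp only [Set.mem_setOf_eq, Set.mem_iUnion, Set.mem_iInter, Set.mem_preimage,
      Set.mem_singleton_iff, exists_prop, Finset.mem_coe]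
    constructor
    · intro h
      refine ⟨Finsupp.equivFunOnFinite.symm (fun i => X i ω), ?_, fun i => ?_⟩
      · rw [hA, Finset.mem_finsuppAntidiag]
        refine ⟨?_, Finset.subset_univ _⟩
        simpa [Finsupp.coe_equivFunOnFinite_symm] using h
      · simp [Finsupp.coe_equivFunOnFinite_symm]
    · rintro ⟨f, hf, hfi⟩
      rw [hA, Finset.mem_finsuppAntidiag] at hf
      rw [← hf.1]
      exact Finset.sum_congr rfl fun i _ => hfi i
  have hdisj : (↑A : Set (Fin k →₀ ℕ)).PairwiseDisjoint
      (fun f : Fin k →₀ ℕ => ⋂ i, X i ⁻¹' {f i}) := by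
    intro f hfA g hgA hfg
    rw [Function.onFun, Set.disjoint_left]
    intro ω hωf hωg
    simp only [Set.mem_iInter, Set.mem_preimage, Set.mem_singleton_iff] at hωf hωg
    exact hfg (Finsupp.ext fun i => (hωf i).symm.trans (hωg i))
  have hmeasU : ∀ f ∈ A, MeasurableSet (⋂ i, X i ⁻¹' {(f : Fin k →₀ ℕ) i}) :=
    fun f _ => MeasurableSet.iInter fun i => hXm i (measurableSet_singleton _)
  rw [hset, measure_biUnion_finset hdisj hmeasU]
  -- product formula for each intersection
  have hterm : ∀ f ∈ A, μ (⋂ i, X i ⁻¹' {(f : Fin k →₀ ℕ) i}) =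
      ENNReal.ofReal (∏ i : Fin k, truncDegPoissonPmf l r a (f i)) := by
    intro f _
    rw [hIndep.meas_iInter fun i => ⟨{(f : Fin k →₀ ℕ) i}, measurableSet_singleton _, rfl⟩]
    rw [ofReal_prod' _ _ (fun i _ => hpmf_nn _)]
    exact Finset.prod_congr rfl fun i _ => hXd i (f i)
  rw [Finset.sum_congr rfl hterm,
    ← ENNReal.ofReal_sum_of_nonneg (fun f _ => Finset.prod_nonneg fun i _ => hpmf_nn _)]
  by_cases hn : k * (r + 1) ≤ n
  · rw [if_pos hn]
    congr 1
    -- real algebra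
    have hsum_eq : ∑ f ∈ A, ∏ i : Fin k, truncDegPoissonPmf l r a ((f : Fin k →₀ ℕ) i) =
        (PowerSeries.coeff n ((degExpPS l - degExpTruncPS l r) ^ k)) * a ^ n *
          ((degExp l a - degExpTrunc l r a)⁻¹) ^ k := by
      rw [coeff_pow_eq, Finset.sum_mul, Finset.sum_mul]
      refine Finset.sum_congr rfl fun f hf => ?_
      have hfsum : ∑ i : Fin k, (f : Fin k →₀ ℕ) i = n := by
        rw [Finset.mem_finsuppAntidiag] at hf
        exact hf.1
      calc ∏ i : Fin k, truncDegPoissonPmf l r a (f i)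
          = ∏ i : Fin k, (PowerSeries.coeff (f i) (degExpPS l - degExpTruncPS l r) *
              a ^ (f i) * (degExp l a - degExpTrunc l r a)⁻¹) := by
            refine Finset.prod_congr rfl fun i _ => ?_
            rw [pmf_eq, div_eq_mul_inv]
        _ = (∏ i : Fin k, PowerSeries.coeff (f i) (degExpPS l - degExpTruncPS l r)) *
              (∏ i : Fin k, a ^ (f i)) *
              (∏ _i : Fin k, (degExp l a - degExpTrunc l r a)⁻¹) := by
            rw [Finset.prod_mul_distrib, Finset.prod_mul_distrib]
        _ = _ := by
            rw [Finset.prod_pow_eq_pow_sum, hfsum, Finset.prod_const, Finset.card_univ,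
              Fintype.card_fin]
    rw [hsum_eq, truncDegStirling2, LinearMap.map_smul, smul_eq_mul]
    have hnf : (Nat.factorial n : ℝ) ≠ 0 := Nat.cast_ne_zero.mpr (Nat.factorial_ne_zero n)
    have hkf : (Nat.factorial k : ℝ) ≠ 0 := Nat.cast_ne_zero.mpr (Nat.factorial_ne_zero k)
    have hDne : (degExp l a - degExpTrunc l r a) ≠ 0 := ne_of_gt hD
    field_simp
    rw [one_div, inv_pow, inv_mul_cancel_right₀ (pow_ne_zero _ hDne)]
  · rw [if_neg hn]
    have hzero : ∑ f ∈ A, ∏ i : Fin k, truncDegPoissonPmf l r a ((f : Fin k →₀ ℕ) i) = 0 := by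
      refine Finset.sum_eq_zero fun f hf => ?_
      have hfsum : ∑ i : Fin k, (f : Fin k →₀ ℕ) i = n := by
        rw [Finset.mem_finsuppAntidiag] at hf
        exact hf.1
      have : ∃ i : Fin k, (f : Fin k →₀ ℕ) i ≤ r := by
        by_contra hc
        push_neg at hc
        have : k * (r + 1) ≤ ∑ i : Fin k, (f : Fin k →₀ ℕ) i := by
          calc k * (r + 1) = ∑ _i : Fin k, (r + 1) := by
                rw [Finset.sum_const, Finset.card_univ, Fintype.card_fin, smul_eq_mul]
            _ ≤ ∑ i : Fin k, (f : Fin k →₀ ℕ) i :=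
                Finset.sum_le_sum fun i _ => hc i
        omega
      obtain ⟨i, hi⟩ := this
      apply Finset.prod_eq_zero (Finset.mem_univ i)
      rw [truncDegPoissonPmf, if_neg (by omega)]
    rw [hzero, ENNReal.ofReal_zero]
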